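/- arXiv:1509.06231 — 3 statements merged into one kernel-verified Lean document; each statement's English description precedes it below -/
import Mathlib

section
/- Let F = a·∏_{i=1}^n (X − z_i) ∈ ℂ[X] with a ≠ 0 and n = deg F ≥ 2, where z_1,…,z_n are the roots listed with multiplicity. Let k be an integer with 0 ≤ k ≤ n, let K ∈ ℝ with K ≥ 1, and let c_1 ∈ ℝ satisfy c_1·n ≥ max(1,k)/ln(1 + 1/(8K)). Let λ ∈ ℝ with λ ≥ 16·K·max(1,k)²·n, let m ∈ ℂ and r > 0, and assume |z_i − m| < r for 1 ≤ i ≤ k and |z_i − m| ≥ λ·r for k < i ≤ n. Then F^{(k)}(m) ≠ 0 and ∑_{i=0}^{k−1} (|F^{(i)}(m)| / |F^{(k)}(m)|)·(c_1·n·r)^{i−k}·k!/i! < 1/(2K). -/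
open Polynomial Finset

private lemma aux_choose_le_pow (m : ℕ) : ∀ t : ℕ, m.choose t ≤ m ^ t := by
  intro t
  induction t with
  | zero => simp
  | succ t ih =>
    calc m.choose (t + 1) ≤ m.choose (t + 1) * (t + 1) := Nat.le_mul_of_pos_right _ t.succ_pos
      _ = m.choose t * (m - t) := Nat.choose_succ_right_eq m t
      _ ≤ m ^ t * m := Nat.mul_le_mul ih (Nat.sub_le m t)
      _ = m ^ (t + 1) := (pow_succ m t).symm

private lemma aux_choose_step (k' j : ℕ) (h : j + 1 ≤ k') :
    k'.choose j ≤ k' * k'.choose (j + 1) := by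
  have h1 : k'.choose j ≤ k'.choose j * (k' - j) :=
    Nat.le_mul_of_pos_right _ (by omega)
  have h2 : k'.choose j * (k' - j) = k'.choose (j + 1) * (j + 1) :=
    (Nat.choose_succ_right_eq k' j).symm
  calc k'.choose j ≤ k'.choose (j + 1) * (j + 1) := h1.trans_eq h2
    _ ≤ k'.choose (j + 1) * k' := Nat.mul_le_mul_left _ h
    _ = k' * k'.choose (j + 1) := Nat.mul_comm _ _

private lemma aux_choose_le_choose_mul_pow (k' : ℕ) {s j : ℕ} (hsj : s ≤ j) (hjk : j ≤ k') :
    k'.choose s ≤ k'.choose j * k' ^ (j - s) := by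
  induction j, hsj using Nat.le_induction with
  | base => simp
  | succ j hsj ih =>
    have hj : j ≤ k' := by omega
    calc k'.choose s ≤ k'.choose j * k' ^ (j - s) := ih hj
      _ ≤ (k' * k'.choose (j + 1)) * k' ^ (j - s) :=
        Nat.mul_le_mul_right _ (aux_choose_step k' j hjk)
      _ = k'.choose (j + 1) * (k' ^ (j - s) * k') := by ring
      _ = k'.choose (j + 1) * k' ^ (j + 1 - s) := by
        rw [← pow_succ]
        have h2 : j - s + 1 = j + 1 - s := by omega
        rw [h2]

private lemma aux_coeff_small (f : ℕ → ℂ) (ρ : ℝ) (hρ : 0 ≤ ρ) :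
    ∀ S : Finset ℕ, (∀ i ∈ S, ‖f i‖ ≤ ρ) → ∀ s : ℕ,
      ‖(∏ i ∈ S, (X - C (f i))).coeff s‖ ≤
        (S.card.choose s : ℝ) * ρ ^ (S.card - s) := by
  intro S
  induction S using Finset.induction_on with
  | empty =>
    intro _ s
    cases s with
    | zero => simp
    | succ s => simp [coeff_one]
  | @insert c S hc ih =>
    intro h s
    have hfc : ‖f c‖ ≤ ρ := h c (Finset.mem_insert_self c S)
    have hS : ∀ i ∈ S, ‖f i‖ ≤ ρ := fun i hi => h i (Finset.mem_insert_of_mem hi)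
    set p := ∏ i ∈ S, (X - C (f i)) with hp
    set M := S.card with hM
    have hcard : (insert c S).card = M + 1 := Finset.card_insert_of_notMem hc
    have hprod : ∏ i ∈ insert c S, (X - C (f i)) = X * p - C (f c) * p := by
      rw [Finset.prod_insert hc, sub_mul]
    rw [hprod, hcard]
    cases s with
    | zero =>
      have h0 : (X * p - C (f c) * p).coeff 0 = - (f c * p.coeff 0) := by
        simp [mul_coeff_zero]
      rw [h0]
      calc ‖-(f c * p.coeff 0)‖ = ‖f c‖ * ‖p.coeff 0‖ := by
            rw [norm_neg, norm_mul]
        _ ≤ ρ * ((M.choose 0 : ℝ) * ρ ^ (M - 0)) := by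
            apply mul_le_mul hfc (ih hS 0) (norm_nonneg _) hρ
        _ = ((M + 1).choose 0 : ℝ) * ρ ^ (M + 1 - 0) := by
            simp [pow_succ, mul_comm, mul_assoc, mul_left_comm]
    | succ s =>
      have h1 : (X * p - C (f c) * p).coeff (s + 1) = p.coeff s - f c * p.coeff (s + 1) := by
        rw [coeff_sub, coeff_X_mul, coeff_C_mul]
      rw [h1]
      have key : (M.choose s : ℝ) * ρ ^ (M - s) + ρ * ((M.choose (s+1) : ℝ) * ρ ^ (M - (s+1)))
          ≤ ((M + 1).choose (s+1) : ℝ) * ρ ^ (M + 1 - (s + 1)) := by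
        have hcc : ((M+1).choose (s+1) : ℝ) = (M.choose s : ℝ) + (M.choose (s+1) : ℝ) := by
          rw [Nat.choose_succ_succ]; push_cast; ring
        rw [hcc, Nat.succ_sub_succ]
        by_cases hsm : s + 1 ≤ M
        · have : ρ * ρ ^ (M - (s+1)) = ρ ^ (M - s) := by
            rw [← pow_succ']
            congr 1
            omega
          rw [mul_left_comm, this, ← add_mul]
        · have : M.choose (s+1) = 0 := Nat.choose_eq_zero_of_lt (by omega)
          rw [this]
          have hpow : (0:ℝ) ≤ ρ ^ (M - s) := pow_nonneg hρ _
          push_cast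
          nlinarith [pow_nonneg hρ (M - (s+1))]
      calc ‖p.coeff s - f c * p.coeff (s + 1)‖
          ≤ ‖p.coeff s‖ + ‖f c‖ * ‖p.coeff (s+1)‖ := by
            refine (norm_sub_le _ _).trans ?_
            rw [norm_mul]
        _ ≤ (M.choose s : ℝ) * ρ ^ (M - s) + ρ * ((M.choose (s+1) : ℝ) * ρ ^ (M - (s+1))) := by
            refine add_le_add (ih hS s) ?_
            exact mul_le_mul hfc (ih hS (s+1)) (norm_nonneg _) hρ
        _ ≤ ((M + 1).choose (s+1) : ℝ) * ρ ^ (M + 1 - (s + 1)) := key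

private lemma aux_coeff_big (f : ℕ → ℂ) (ρ : ℝ) (hρ : 0 < ρ) :
    ∀ S : Finset ℕ, (∀ i ∈ S, ρ ≤ ‖f i‖) → ∀ t : ℕ,
      ‖(∏ i ∈ S, (X - C (f i))).coeff t‖ * ρ ^ t ≤
        (S.card.choose t : ℝ) * ∏ i ∈ S, ‖f i‖ := by
  intro S
  induction S using Finset.induction_on with
  | empty =>
    intro _ t
    cases t with
    | zero => simp
    | succ t =>
      simp only [Finset.prod_empty, coeff_one]
      norm_num [Nat.choose_eq_zero_of_lt (Nat.succ_pos t)]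
  | @insert c S hc ih =>
    intro h t
    have hfc : ρ ≤ ‖f c‖ := h c (Finset.mem_insert_self c S)
    have hS : ∀ i ∈ S, ρ ≤ ‖f i‖ := fun i hi => h i (Finset.mem_insert_of_mem hi)
    have hPnn : (0:ℝ) ≤ ∏ i ∈ S, ‖f i‖ :=
      Finset.prod_nonneg fun i _ => norm_nonneg _
    set p := ∏ i ∈ S, (X - C (f i)) with hp
    set M := S.card with hM
    have hcard : (insert c S).card = M + 1 := Finset.card_insert_of_notMem hc
    have hprodabs : ∏ i ∈ insert c S, ‖f i‖
        = ‖f c‖ * ∏ i ∈ S, ‖f i‖ := Finset.prod_insert hc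
    have hprod : ∏ i ∈ insert c S, (X - C (f i)) = X * p - C (f c) * p := by
      rw [Finset.prod_insert hc, sub_mul]
    rw [hprod, hcard, hprodabs]
    cases t with
    | zero =>
      have h0 : (X * p - C (f c) * p).coeff 0 = - (f c * p.coeff 0) := by
        simp [mul_coeff_zero]
      rw [h0, norm_neg, norm_mul, pow_zero, mul_one]
      have := ih hS 0
      rw [pow_zero, mul_one] at this
      calc ‖f c‖ * ‖p.coeff 0‖
          ≤ ‖f c‖ * ((M.choose 0 : ℝ) * ∏ i ∈ S, ‖f i‖) :=
            mul_le_mul_of_nonneg_left this (norm_nonneg _)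
        _ = ((M+1).choose 0 : ℝ) * (‖f c‖ * ∏ i ∈ S, ‖f i‖) := by
            simp [mul_comm, mul_assoc, mul_left_comm]
    | succ s =>
      have h1 : (X * p - C (f c) * p).coeff (s + 1) = p.coeff s - f c * p.coeff (s + 1) := by
        rw [coeff_sub, coeff_X_mul, coeff_C_mul]
      rw [h1]
      have hcc : ((M+1).choose (s+1) : ℝ) = (M.choose s : ℝ) + (M.choose (s+1) : ℝ) := by
        rw [Nat.choose_succ_succ]; push_cast; ring
      have ihs := ih hS s
      have ihs1 := ih hS (s+1)
      calc ‖p.coeff s - f c * p.coeff (s + 1)‖ * ρ ^ (s+1)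
          ≤ (‖p.coeff s‖ + ‖f c‖ * ‖p.coeff (s+1)‖)
              * ρ ^ (s+1) := by
            refine mul_le_mul_of_nonneg_right ?_ (pow_nonneg hρ.le _)
            refine (norm_sub_le _ _).trans ?_
            rw [norm_mul]
        _ = (‖p.coeff s‖ * ρ ^ s) * ρ
              + ‖f c‖ * (‖p.coeff (s+1)‖ * ρ ^ (s+1)) := by
            rw [pow_succ]; ring
        _ ≤ ((M.choose s : ℝ) * ∏ i ∈ S, ‖f i‖) * ‖f c‖
              + ‖f c‖ * ((M.choose (s+1) : ℝ) * ∏ i ∈ S, ‖f i‖) := by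
            refine add_le_add ?_ ?_
            · calc (‖p.coeff s‖ * ρ ^ s) * ρ
                  ≤ ((M.choose s : ℝ) * ∏ i ∈ S, ‖f i‖) * ρ :=
                    mul_le_mul_of_nonneg_right ihs hρ.le
                _ ≤ ((M.choose s : ℝ) * ∏ i ∈ S, ‖f i‖) * ‖f c‖ :=
                    mul_le_mul_of_nonneg_left hfc (by positivity)
            · exact mul_le_mul_of_nonneg_left ihs1 (norm_nonneg _)
        _ = ((M+1).choose (s+1) : ℝ) * (‖f c‖ * ∏ i ∈ S, ‖f i‖) := by
            rw [hcc]; ring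

private lemma aux_geom (x : ℝ) (h0 : 0 ≤ x) (h1 : x < 1) (n : ℕ) :
    ∑ i ∈ Finset.range n, x ^ i ≤ 1 / (1 - x) := by
  have h2 : (0:ℝ) < 1 - x := by linarith
  rw [geom_sum_eq (ne_of_lt h1) n]
  have h3 : (x ^ n - 1) / (x - 1) = (1 - x ^ n) / (1 - x) := by
    rw [← neg_div_neg_eq]; ring_nf
  rw [h3, div_le_div_iff₀ h2 h2]
  have : (0:ℝ) ≤ x ^ n := pow_nonneg h0 n
  nlinarith

private lemma aux_geom_full (jj : ℕ) :
    ∑ i ∈ Finset.range (jj + 1), (1/16 : ℝ) ^ (jj - i) ≤ 16/15 := by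
  have h := Finset.sum_range_reflect (fun i => (1/16 : ℝ) ^ i) (jj + 1)
  have h2 : ∀ i ∈ Finset.range (jj + 1), (1/16 : ℝ) ^ (jj - i) = (1/16 : ℝ) ^ (jj + 1 - 1 - i) := by
    intro i hi; norm_num
  rw [Finset.sum_congr rfl h2, h]
  have := aux_geom (1/16 : ℝ) (by norm_num) (by norm_num) (jj + 1)
  linarith

private lemma aux_geom_tail (kk : ℕ) :
    ∑ i ∈ Finset.range kk, (1/16 : ℝ) ^ (kk - i) ≤ 1/15 := by
  have h := Finset.sum_range_reflect (fun i => (1/16 : ℝ) ^ (i + 1)) kk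
  have h2 : ∀ i ∈ Finset.range kk, (1/16 : ℝ) ^ (kk - i) = (1/16 : ℝ) ^ (kk - 1 - i + 1) := by
    intro i hi
    rw [Finset.mem_range] at hi
    congr 1
    omega
  rw [Finset.sum_congr rfl h2, h]
  have hg := aux_geom (1/16 : ℝ) (by norm_num) (by norm_num) kk
  have h3 : ∑ i ∈ Finset.range kk, (1/16 : ℝ) ^ (i + 1)
      = (1/16) * ∑ i ∈ Finset.range kk, (1/16 : ℝ) ^ i := by
    rw [Finset.mul_sum]
    exact Finset.sum_congr rfl fun i _ => by rw [pow_succ]; ring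
  rw [h3]
  nlinarith

set_option maxHeartbeats 1600000 in
/-- **Head estimate for the Taylor coefficients at `m`** (second appendix lemma):
if `D(m,r)` is `(1, λ)`-isolating for the roots `z_1, …, z_k` of `F = a·∏ (X − z_i)`,
with `λ ≥ 16K·max(1,k)²·n`, then `F^{(k)}(m) ≠ 0` and
`∑_{i=0}^{k−1} (|F^{(i)}(m)|/|F^{(k)}(m)|)·(c₁nr)^{i−k}·k!/i! < 1/(2K)`. -/
theorem taylor_head_small (n : ℕ) (hn : 2 ≤ n) (a : ℂ) (ha : a ≠ 0) (z : ℕ → ℂ)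
    (F : Polynomial ℂ)
    (hF : F = Polynomial.C a * ∏ i ∈ Finset.range n, (Polynomial.X - Polynomial.C (z i)))
    (k : ℕ) (hk : k ≤ n) (K : ℝ) (hK : 1 ≤ K) (c₁ : ℝ)
    (hc₁ : max 1 (k : ℝ) / Real.log (1 + 1 / (8 * K)) ≤ c₁ * n)
    (lam : ℝ) (hlam : 16 * K * (max 1 (k : ℝ)) ^ 2 * n ≤ lam)
    (m : ℂ) (r : ℝ) (hr : 0 < r)
    (hin : ∀ i, i < k → ‖z i - m‖ < r)
    (hout : ∀ i, k ≤ i → i < n → lam * r ≤ ‖z i - m‖) :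
    (Polynomial.derivative^[k] F).eval m ≠ 0 ∧
    ∑ i ∈ Finset.range k,
        (‖(Polynomial.derivative^[i] F).eval m‖ /
            ‖(Polynomial.derivative^[k] F).eval m‖) *
          (c₁ * n * r) ^ ((i : ℤ) - (k : ℤ)) *
          (Nat.factorial k / Nat.factorial i : ℝ) <
      1 / (2 * K) := by
  have hK0 : (0:ℝ) < K := lt_of_lt_of_le one_pos hK
  set M : ℝ := max 1 (k : ℝ) with hM
  have hM1 : (1:ℝ) ≤ M := le_max_left _ _
  have hM0 : (0:ℝ) < M := lt_of_lt_of_le one_pos hM1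
  have hkM : (k:ℝ) ≤ M := le_max_right _ _
  have hn0 : (0:ℝ) < (n:ℝ) := by exact_mod_cast lt_of_lt_of_le two_pos hn
  have hlam0 : (0:ℝ) < lam := lt_of_lt_of_le (by positivity) hlam
  have hlr : (0:ℝ) < lam * r := mul_pos hlam0 hr
  set w : ℕ → ℂ := fun i => z i - m with hw
  set P : ℂ[X] := ∏ i ∈ Finset.range k, (X - C (w i)) with hP
  set Q : ℂ[X] := ∏ i ∈ Finset.Ico k n, (X - C (w i)) with hQ
  set G : ℂ[X] := C a * (P * Q) with hGdef
  set W : ℝ := ∏ i ∈ Finset.Ico k n, ‖w i‖ with hWdef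
  have hW0 : (0:ℝ) < W := by
    refine Finset.prod_pos fun i hi => ?_
    rw [Finset.mem_Ico] at hi
    exact lt_of_lt_of_le hlr (hout i hi.1 hi.2)
  have ha0 : (0:ℝ) < ‖a‖ := by
    simpa using (norm_pos_iff.mpr ha)
  -- Taylor expansion of F at m is G
  have hG : Polynomial.taylor m F = G := by
    rw [hF, taylor_apply, mul_comp, C_comp, Polynomial.prod_comp]
    have h1 : ∀ i : ℕ, ((X : ℂ[X]) - C (z i)).comp (X + C m) = X - C (w i) := by
      intro i
      rw [sub_comp, X_comp, C_comp, hw]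
      simp only []
      rw [C_sub]
      ring
    rw [Finset.prod_congr rfl fun i _ => h1 i]
    have hsplit : ∏ i ∈ Finset.range n, (X - C (w i)) = P * Q := by
      rw [hP, hQ, Finset.range_eq_Ico, ← Finset.prod_Ico_consecutive _ (Nat.zero_le k) hk, Finset.range_eq_Ico]
    rw [hsplit, hGdef]
  have hder : ∀ j : ℕ, ((Polynomial.derivative (R := ℂ))^[j] F).eval m
      = (j.factorial : ℂ) * G.coeff j := by
    intro j
    have h1 : (Polynomial.derivative (R := ℂ))^[j] F
        = j.factorial • (Polynomial.hasseDeriv j F) := by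
      rw [← Polynomial.factorial_smul_hasseDeriv]; rfl
    rw [h1, eval_smul, ← Polynomial.taylor_coeff, hG, nsmul_eq_mul]
  -- coefficients of G as convolution
  have hcoeff : ∀ j : ℕ, G.coeff j
      = a * ∑ i ∈ Finset.range (j+1), P.coeff i * Q.coeff (j - i) := by
    intro j
    rw [hGdef, coeff_C_mul, coeff_mul,
      Finset.Nat.sum_antidiagonal_eq_sum_range_succ_mk]
  -- P is monic of degree k
  have hPm : P.Monic := monic_prod_of_monic _ _ fun i _ => monic_X_sub_C _
  have hPd : P.natDegree = k := by
    rw [hP, natDegree_prod_of_monic _ _ fun i _ => monic_X_sub_C _]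
    simp [natDegree_X_sub_C]
  have hPk : P.coeff k = 1 := by rw [← hPd]; exact hPm.coeff_natDegree
  -- |Q.coeff 0| = W
  have hQW : ‖Q.coeff 0‖ = W := by
    rw [hQ, coeff_zero_eq_eval_zero, eval_prod]
    simp only [eval_sub, eval_X, eval_C]
    rw [norm_prod]
    exact Finset.prod_congr rfl fun i _ => by rw [zero_sub, norm_neg]
  -- coefficient bounds
  have hPbound : ∀ s : ℕ, ‖P.coeff s‖ ≤ (k.choose s : ℝ) * r ^ (k - s) := by
    intro s
    have := aux_coeff_small w r hr.le (Finset.range k)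
      (fun i hi => (hin i (Finset.mem_range.mp hi)).le) s
    simpa [Finset.card_range] using this
  have hQbound : ∀ t : ℕ, ‖Q.coeff t‖ * (lam * r) ^ t
      ≤ ((n - k).choose t : ℝ) * W := by
    intro t
    have := aux_coeff_big w (lam * r) hlr (Finset.Ico k n)
      (fun i hi => hout i (Finset.mem_Ico.mp hi).1 (Finset.mem_Ico.mp hi).2) t
    simpa [Nat.card_Ico] using this
  -- key per-term bound
  have hkey : ∀ j : ℕ, j ≤ k → ∀ i : ℕ, i ≤ j →
      ‖P.coeff i‖ * ‖Q.coeff (j - i)‖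
        ≤ (k.choose j : ℝ) * (1/16 : ℝ) ^ (j - i) * r ^ (k - j) * W := by
    intro j hj i hij
    have h1 := hPbound i
    have h2 : ‖Q.coeff (j - i)‖ ≤ ((n - k).choose (j - i) : ℝ) * W / (lam * r) ^ (j - i) := by
      rw [le_div_iff₀ (by positivity)]
      exact hQbound (j - i)
    have hstep : ‖P.coeff i‖ * ‖Q.coeff (j - i)‖
        ≤ ((k.choose i : ℝ) * r ^ (k - i)) * (((n - k).choose (j - i) : ℝ) * W / (lam * r) ^ (j - i)) :=
      mul_le_mul h1 h2 (norm_nonneg _) (by positivity)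
    refine hstep.trans ?_
    -- rewrite r ^ (k - i) = r ^ (k - j) * r ^ (j - i)
    have hri : r ^ (k - i) = r ^ (k - j) * r ^ (j - i) := by
      rw [← pow_add]; congr 1; omega
    -- numeric binomial bound
    have hnat : (k.choose i : ℝ) * ((n - k).choose (j - i) : ℝ) * 16 ^ (j - i)
        ≤ (k.choose j : ℝ) * lam ^ (j - i) := by
      have hb1 : (k.choose i : ℝ) ≤ (k.choose j : ℝ) * (k : ℝ) ^ (j - i) := by
        exact_mod_cast Nat.cast_le.mpr (aux_choose_le_choose_mul_pow k hij hj)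
      have hb2 : (((n - k).choose (j - i)) : ℝ) ≤ ((n:ℝ)) ^ (j - i) := by
        calc (((n - k).choose (j - i)) : ℝ) ≤ ((n - k : ℕ) : ℝ) ^ (j - i) := by
              exact_mod_cast aux_choose_le_pow (n - k) (j - i)
          _ ≤ (n:ℝ) ^ (j - i) := by
              apply pow_le_pow_left₀ (by positivity)
              exact_mod_cast Nat.sub_le n k
      have hb3 : ((16:ℝ) * k * n) ^ (j - i) ≤ lam ^ (j - i) := by
        rcases Nat.eq_zero_or_pos (j - i) with hd | hd
        · rw [hd]; simp
        · have hk1 : (1:ℝ) ≤ (k:ℝ) := by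
            have : 1 ≤ k := by omega
            exact_mod_cast this
          have h16 : (16:ℝ) * k * n ≤ lam := by
            refine le_trans ?_ hlam
            have hkM2 : (k:ℝ) ≤ M ^ 2 := by nlinarith
            have hkn : (k:ℝ) * n ≤ M ^ 2 * n := mul_le_mul_of_nonneg_right hkM2 hn0.le
            have hMn : (0:ℝ) ≤ M ^ 2 * n := by positivity
            nlinarith
          exact pow_le_pow_left₀ (by positivity) h16 _
      calc (k.choose i : ℝ) * ((n - k).choose (j - i) : ℝ) * 16 ^ (j - i)
          ≤ ((k.choose j : ℝ) * (k : ℝ) ^ (j - i)) * ((n:ℝ) ^ (j - i)) * 16 ^ (j - i) := by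
            apply mul_le_mul_of_nonneg_right _ (by positivity)
            exact mul_le_mul hb1 hb2 (by positivity) (by positivity)
        _ = (k.choose j : ℝ) * ((16:ℝ) * k * n) ^ (j - i) := by
            rw [mul_pow, mul_pow]; ring
        _ ≤ (k.choose j : ℝ) * lam ^ (j - i) := by
            exact mul_le_mul_of_nonneg_left hb3 (by positivity)
    -- combine
    rw [hri]
    rw [mul_pow lam r (j - i)]
    rw [div_eq_mul_inv]
    have hrpos : (0:ℝ) < r ^ (j - i) := pow_pos hr _
    have hlampos : (0:ℝ) < lam ^ (j - i) := pow_pos hlam0 _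
    have h16pos : (0:ℝ) < (16:ℝ) ^ (j - i) := by positivity
    have hgoal : (k.choose i : ℝ) * ((n - k).choose (j - i) : ℝ) / lam ^ (j - i)
        ≤ (k.choose j : ℝ) * (1/16 : ℝ) ^ (j - i) := by
      have h116 : (1/16 : ℝ) ^ (j - i) = ((16:ℝ) ^ (j - i))⁻¹ := by
        rw [div_pow]; simp
      rw [div_le_iff₀ hlampos, h116]
      have h' : (k.choose j : ℝ) * ((16:ℝ) ^ (j - i))⁻¹ * lam ^ (j - i)
          = (k.choose j : ℝ) * lam ^ (j - i) / 16 ^ (j - i) := by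
        field_simp
      rw [h', le_div_iff₀ h16pos]
      exact hnat
    calc (k.choose i : ℝ) * (r ^ (k - j) * r ^ (j - i)) *
          (((n - k).choose (j - i) : ℝ) * W * (lam ^ (j - i) * r ^ (j - i))⁻¹)
        = ((k.choose i : ℝ) * ((n - k).choose (j - i) : ℝ) / lam ^ (j - i)) * r ^ (k - j) * W := by
          field_simp
      _ ≤ ((k.choose j : ℝ) * (1/16 : ℝ) ^ (j - i)) * r ^ (k - j) * W := by
          apply mul_le_mul_of_nonneg_right _ hW0.le
          exact mul_le_mul_of_nonneg_right hgoal (by positivity)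
      _ = (k.choose j : ℝ) * (1/16 : ℝ) ^ (j - i) * r ^ (k - j) * W := by ring
  -- lower bound for |G.coeff k|
  set B : ℝ := ‖G.coeff k‖ with hB
  have hBlow : (14/15 : ℝ) * (‖a‖ * W) ≤ B := by
    have hsum := hcoeff k
    rw [Finset.sum_range_succ, hPk, Nat.sub_self, one_mul] at hsum
    set rest : ℂ := ∑ i ∈ Finset.range k, P.coeff i * Q.coeff (k - i) with hrest
    have hrb : ‖rest‖ ≤ (1/15 : ℝ) * W := by
      calc ‖rest‖ ≤ ∑ i ∈ Finset.range k, ‖P.coeff i * Q.coeff (k - i)‖ :=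
            norm_sum_le _ _
        _ ≤ ∑ i ∈ Finset.range k, (1/16 : ℝ) ^ (k - i) * W := by
            refine Finset.sum_le_sum fun i hi => ?_
            rw [norm_mul]
            have := hkey k le_rfl i (Finset.mem_range.mp hi).le
            rw [Nat.choose_self, Nat.sub_self, pow_zero] at this
            calc ‖P.coeff i‖ * ‖Q.coeff (k - i)‖
                ≤ (1:ℝ) * (1/16 : ℝ) ^ (k - i) * 1 * W := by simpa using this
              _ = (1/16 : ℝ) ^ (k - i) * W := by ring
        _ = (∑ i ∈ Finset.range k, (1/16 : ℝ) ^ (k - i)) * W := by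
            rw [Finset.sum_mul]
        _ ≤ (1/15 : ℝ) * W := by
            exact mul_le_mul_of_nonneg_right (aux_geom_tail k) hW0.le
    have habs : W - (1/15) * W ≤ ‖rest + Q.coeff 0‖ := by
      have h1 : ‖Q.coeff 0‖ ≤ ‖rest + Q.coeff 0‖ + ‖rest‖ := by
        calc ‖Q.coeff 0‖ = ‖(rest + Q.coeff 0) + (-rest)‖ := by
              congr 1; ring
          _ ≤ ‖rest + Q.coeff 0‖ + ‖-rest‖ := norm_add_le _ _
          _ = ‖rest + Q.coeff 0‖ + ‖rest‖ := by rw [norm_neg]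
      rw [hQW] at h1
      linarith
    have hBval : B = ‖a‖ * ‖rest + Q.coeff 0‖ := by
      rw [hB, hsum, norm_mul]
    rw [hBval]
    calc (14/15 : ℝ) * (‖a‖ * W) = ‖a‖ * (W - (1/15) * W) := by ring
      _ ≤ ‖a‖ * ‖rest + Q.coeff 0‖ :=
          mul_le_mul_of_nonneg_left habs ha0.le
  have hB0 : (0:ℝ) < B := lt_of_lt_of_le (by nlinarith [mul_pos ha0 hW0]) hBlow
  have hGk_ne : G.coeff k ≠ 0 := by
    intro h
    rw [hB, h] at hB0
    simp at hB0
  constructor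
  · rw [hder k]
    exact mul_ne_zero (Nat.cast_ne_zero.mpr (Nat.factorial_ne_zero k)) hGk_ne
  -- the head sum
  · set L : ℝ := Real.log (1 + 1 / (8 * K)) with hL
    have hLpos : 0 < L := Real.log_pos (by nlinarith [one_div_pos.mpr (by positivity : (0:ℝ) < 8 * K)])
    set x : ℝ := c₁ * n with hx
    have hxM : M / L ≤ x := hc₁
    have hx0 : (0:ℝ) < x := lt_of_lt_of_le (div_pos hM0 hLpos) hxM
    have hxr : (0:ℝ) < x * r := mul_pos hx0 hr
    -- upper bound for |G.coeff j| for j < k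
    have hGj : ∀ j : ℕ, j < k → ‖G.coeff j‖
        ≤ ‖a‖ * ((k.choose j : ℝ) * r ^ (k - j) * W * (16/15)) := by
      intro j hj
      rw [hcoeff j, norm_mul]
      refine mul_le_mul_of_nonneg_left ?_ ha0.le
      calc ‖∑ i ∈ Finset.range (j+1), P.coeff i * Q.coeff (j - i)‖
          ≤ ∑ i ∈ Finset.range (j+1), ‖P.coeff i * Q.coeff (j - i)‖ :=
            norm_sum_le _ _
        _ ≤ ∑ i ∈ Finset.range (j+1), (k.choose j : ℝ) * (1/16:ℝ) ^ (j - i) * r ^ (k - j) * W := by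
            refine Finset.sum_le_sum fun i hi => ?_
            rw [norm_mul]
            exact hkey j hj.le i (Nat.lt_succ_iff.mp (Finset.mem_range.mp hi))
        _ = ((k.choose j : ℝ) * r ^ (k - j) * W) * ∑ i ∈ Finset.range (j+1), (1/16:ℝ) ^ (j - i) := by
            rw [Finset.mul_sum]
            exact Finset.sum_congr rfl fun i _ => by ring
        _ ≤ ((k.choose j : ℝ) * r ^ (k - j) * W) * (16/15) := by
            exact mul_le_mul_of_nonneg_left (aux_geom_full j)
              (mul_nonneg (mul_nonneg (Nat.cast_nonneg _) (pow_nonneg hr.le _)) hW0.le)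
        _ = (k.choose j : ℝ) * r ^ (k - j) * W * (16/15) := by ring
    -- per-term bound for the head sum
    have hterm : ∀ j ∈ Finset.range k,
        (‖(Polynomial.derivative^[j] F).eval m‖ /
            ‖(Polynomial.derivative^[k] F).eval m‖) *
          (c₁ * n * r) ^ ((j : ℤ) - (k : ℤ)) *
          (Nat.factorial k / Nat.factorial j : ℝ)
        ≤ (8/7 : ℝ) / x ^ k * ((k.choose j : ℝ) * x ^ j) := by
      intro j hj
      have hjk : j < k := Finset.mem_range.mp hj
      have hFj : ‖(Polynomial.derivative^[j] F).eval m‖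
          = (j.factorial : ℝ) * ‖G.coeff j‖ := by
        rw [hder j, norm_mul, Complex.norm_natCast]
      have hFk : ‖(Polynomial.derivative^[k] F).eval m‖
          = (k.factorial : ℝ) * B := by
        rw [hder k, norm_mul, Complex.norm_natCast, hB]
      have hjf : (0:ℝ) < (j.factorial : ℝ) := by exact_mod_cast j.factorial_pos
      have hkf : (0:ℝ) < (k.factorial : ℝ) := by exact_mod_cast k.factorial_pos
      set Z : ℝ := (c₁ * n * r) ^ ((j : ℤ) - (k : ℤ)) with hZ
      have hZval : Z = (x * r) ^ j / (x * r) ^ k := by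
        rw [hZ, hx]
        rw [zpow_sub₀ (ne_of_gt hxr), zpow_natCast, zpow_natCast]
      have hZpos : 0 < Z := by
        rw [hZval]; exact div_pos (pow_pos hxr j) (pow_pos hxr k)
      have hsimp : ‖(Polynomial.derivative^[j] F).eval m‖ /
            ‖(Polynomial.derivative^[k] F).eval m‖ *
          Z * (Nat.factorial k / Nat.factorial j : ℝ)
          = (‖G.coeff j‖ / B) * Z := by
        rw [hFj, hFk]
        field_simp [hjf.ne', hkf.ne', hB0.ne']
      rw [hsimp]
      have hdiv : ‖G.coeff j‖ / B
          ≤ (‖a‖ * ((k.choose j : ℝ) * r ^ (k - j) * W * (16/15))) /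
            ((14/15 : ℝ) * (‖a‖ * W)) := by
        have hnum : (0:ℝ) ≤ ‖a‖ * ((k.choose j : ℝ) * r ^ (k - j) * W * (16/15)) :=
          mul_nonneg ha0.le (mul_nonneg (mul_nonneg (mul_nonneg (Nat.cast_nonneg _)
            (pow_nonneg hr.le _)) hW0.le) (by norm_num))
        have hden : (0:ℝ) < (14/15 : ℝ) * (‖a‖ * W) := by
          nlinarith [mul_pos ha0 hW0]
        exact div_le_div₀ hnum (hGj j hjk) hden hBlow
      have hdiv2 : (‖a‖ * ((k.choose j : ℝ) * r ^ (k - j) * W * (16/15))) /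
            ((14/15 : ℝ) * (‖a‖ * W))
          = (8/7 : ℝ) * (k.choose j : ℝ) * r ^ (k - j) := by
        field_simp [ha0.ne', hW0.ne']
        ring
      have hZr : r ^ (k - j) * Z = x ^ j / x ^ k := by
        have hrr : r ^ (k - j) * r ^ j = r ^ k := by
          rw [← pow_add]; congr 1; omega
        have h1 : r ^ (k - j) * ((x * r) ^ j / (x * r) ^ k)
            = (r ^ (k - j) * (x * r) ^ j) / (x * r) ^ k := by ring
        rw [hZval, h1, div_eq_div_iff (pow_pos hxr k).ne' (pow_pos hx0 k).ne', mul_pow, mul_pow]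
        linear_combination (x ^ j * x ^ k) * hrr
      calc (‖G.coeff j‖ / B) * Z
          ≤ ((8/7 : ℝ) * (k.choose j : ℝ) * r ^ (k - j)) * Z := by
            apply mul_le_mul_of_nonneg_right _ hZpos.le
            rw [← hdiv2]
            exact hdiv
        _ = (8/7 : ℝ) * (k.choose j : ℝ) * (r ^ (k - j) * Z) := by ring
        _ = (8/7 : ℝ) * (k.choose j : ℝ) * (x ^ j / x ^ k) := by rw [hZr]
        _ = (8/7 : ℝ) / x ^ k * ((k.choose j : ℝ) * x ^ j) := by
            field_simp [hx0.ne']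
    -- binomial sum
    have hbinom : ∑ j ∈ Finset.range k, (k.choose j : ℝ) * x ^ j = (x + 1) ^ k - x ^ k := by
      have h := add_pow x 1 k
      rw [Finset.sum_range_succ] at h
      simp only [one_pow, mul_one, Nat.choose_self, Nat.cast_one] at h
      have h2 : ∑ j ∈ Finset.range k, (k.choose j : ℝ) * x ^ j
          = ∑ j ∈ Finset.range k, x ^ j * (k.choose j : ℝ) :=
        Finset.sum_congr rfl fun j _ => by ring
      rw [h2]
      linarith
    -- exponential bound
    have hexp : (x + 1) ^ k ≤ (1 + 1 / (8 * K)) * x ^ k := by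
      have hxk : (0:ℝ) < x ^ k := pow_pos hx0 k
      have hML : M ≤ x * L := by
        rw [div_le_iff₀ hLpos] at hxM
        linarith
      have h1x : 1 / x ≤ L / M := by
        rw [div_le_div_iff₀ hx0 hM0]
        nlinarith
      have hkLM : (k:ℝ) * (L / M) ≤ L := by
        have h1 : (k:ℝ) / M ≤ 1 := (div_le_one hM0).mpr hkM
        have : (k:ℝ) * (L / M) = L * ((k:ℝ) / M) := by ring
        rw [this]
        nlinarith
      have hc : (1 + 1/x) ^ k ≤ 1 + 1 / (8 * K) := by
        calc (1 + 1/x) ^ k ≤ Real.exp (L / M) ^ k := by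
              apply pow_le_pow_left₀ (by nlinarith [one_div_pos.mpr hx0])
              have := Real.add_one_le_exp (L / M)
              linarith
          _ = Real.exp ((k:ℝ) * (L / M)) := (Real.exp_nat_mul _ k).symm
          _ ≤ Real.exp L := Real.exp_le_exp.mpr hkLM
          _ = 1 + 1 / (8 * K) := Real.exp_log (by positivity)
      calc (x + 1) ^ k = x ^ k * (1 + 1/x) ^ k := by
            rw [← mul_pow]
            congr 1
            field_simp [hx0.ne']
        _ ≤ x ^ k * (1 + 1 / (8 * K)) := mul_le_mul_of_nonneg_left hc hxk.le
        _ = (1 + 1 / (8 * K)) * x ^ k := mul_comm _ _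
    -- put everything together
    have hxk : (0:ℝ) < x ^ k := pow_pos hx0 k
    calc ∑ i ∈ Finset.range k,
        (‖(Polynomial.derivative^[i] F).eval m‖ /
            ‖(Polynomial.derivative^[k] F).eval m‖) *
          (c₁ * n * r) ^ ((i : ℤ) - (k : ℤ)) *
          (Nat.factorial k / Nat.factorial i : ℝ)
        ≤ ∑ j ∈ Finset.range k, (8/7 : ℝ) / x ^ k * ((k.choose j : ℝ) * x ^ j) :=
          Finset.sum_le_sum hterm
      _ = (8/7 : ℝ) / x ^ k * ∑ j ∈ Finset.range k, (k.choose j : ℝ) * x ^ j := by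
          rw [Finset.mul_sum]
      _ = (8/7 : ℝ) / x ^ k * ((x + 1) ^ k - x ^ k) := by rw [hbinom]
      _ ≤ (8/7 : ℝ) / x ^ k * ((1 + 1 / (8 * K)) * x ^ k - x ^ k) := by
          apply mul_le_mul_of_nonneg_left _ (by positivity)
          linarith [hexp]
      _ = (8/7 : ℝ) * (1 / (8 * K)) := by
          field_simp [hxk.ne', hK0.ne']
          ring
      _ < 1 / (2 * K) := by
          have e1 : (8/7 : ℝ) * (1 / (8 * K)) = 1 / (7 * K) := by
            field_simp
          rw [e1]
          exact one_div_lt_one_div_of_lt (by positivity) (by nlinarith)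
end

section
/- Let w, w' ∈ ℝ with w > w' > 0 and let m be a positive integer. Let (x_i, n_i)_{i ≥ 1} be a sequence with x_1 = w, n_1 = m, and such that for every i ≥ 1, writing N_i := 2^{2^{n_i}}: if x_i / N_i ≥ w', then 0 ≤ x_{i+1} ≤ x_i / N_i and n_{i+1} = n_i + 1; and if x_i / N_i < w', then 0 ≤ x_{i+1} ≤ x_i / 2 and n_{i+1} = max(1, n_i − 1). Then there exists an index i₀ ≤ 8·(m + log₂ log₂ max(4, w/w')) with x_{i₀} ≤ w'; in particular, the smallest such index is at most 8·(m + log₂ log₂ max(4, w/w')). -/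
/-- **The abstract QIR sequence lemma** (Lemma 25 of Sagraloff 2016): for a sequence
`(x_i, n_i)_{i ≥ 1}` with `x_1 = w`, `n_1 = m`, where (writing `N_i := 2^{2^{n_i}}`)
a quadratic step `x_{i+1} ≤ x_i/N_i`, `n_{i+1} = n_i + 1` is taken whenever
`x_i/N_i ≥ w'`, and otherwise a linear step `x_{i+1} ≤ x_i/2`, `n_{i+1} = max(1, n_i − 1)`
is taken, there is an index `i₀ ≤ 8·(m + log₂ log₂ max(4, w/w'))` with `x_{i₀} ≤ w'`. -/
theorem qir_sequence_lemma (w w' : ℝ) (hw' : 0 < w') (hww' : w' < w)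
    (m : ℕ) (hm : 1 ≤ m) (x : ℕ → ℝ) (nn : ℕ → ℕ)
    (hx1 : x 1 = w) (hn1 : nn 1 = m)
    (hstep : ∀ i, 1 ≤ i →
      (if w' ≤ x i / (2 : ℝ) ^ (2 ^ nn i) then
        0 ≤ x (i + 1) ∧ x (i + 1) ≤ x i / (2 : ℝ) ^ (2 ^ nn i) ∧ nn (i + 1) = nn i + 1
      else
        0 ≤ x (i + 1) ∧ x (i + 1) ≤ x i / 2 ∧ nn (i + 1) = max 1 (nn i - 1))) :
    ∃ i₀ : ℕ, 1 ≤ i₀ ∧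
      (i₀ : ℝ) ≤ 8 * ((m : ℝ) + Real.logb 2 (Real.logb 2 (max 4 (w / w')))) ∧
      x i₀ ≤ w' := by
  classical
  set K : ℝ := max 4 (w / w') with hKdef
  set L : ℝ := Real.logb 2 (Real.logb 2 K) with hLdef
  have h2 : (1:ℝ) < 2 := one_lt_two
  have hK4 : (4:ℝ) ≤ K := le_max_left _ _
  have hlog4 : Real.logb 2 (4:ℝ) = 2 := by
    rw [show (4:ℝ) = 2 ^ (2:ℕ) by norm_num, Real.logb_pow,
      Real.logb_self_eq_one h2]
    norm_num
  have hlogK2 : (2:ℝ) ≤ Real.logb 2 K := by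
    have h := Real.logb_le_logb_of_le h2 (by norm_num : (0:ℝ) < 4) hK4
    rw [hlog4] at h; exact h
  have hL1 : (1:ℝ) ≤ L := by
    have h := Real.logb_le_logb_of_le h2 (by norm_num : (0:ℝ) < 2) hlogK2
    rw [Real.logb_self_eq_one h2] at h; exact h
  set Λ : ℕ := ⌊L⌋₊ with hΛdef
  have hΛ1 : 1 ≤ Λ := Nat.le_floor (by exact_mod_cast hL1)
  have hΛL : (Λ:ℝ) ≤ L := Nat.floor_le (by linarith)
  have hm1 : (1:ℝ) ≤ (m:ℝ) := by exact_mod_cast hm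
  set B : ℝ := 8 * ((m : ℝ) + L) with hBdef
  have hB16 : (16:ℝ) ≤ B := by rw [hBdef]; linarith
  set T : ℕ := ⌊B⌋₊ with hTdef
  have hT16 : 16 ≤ T := Nat.le_floor (by exact_mod_cast hB16)
  have hTB : (T:ℝ) ≤ B := Nat.floor_le (by linarith)
  have hBT1 : B < (T:ℝ) + 1 := by
    have := Nat.lt_floor_add_one B
    exact_mod_cast this
  suffices hmain : ∃ i₀, 1 ≤ i₀ ∧ i₀ ≤ T ∧ x i₀ ≤ w' by
    obtain ⟨i₀, h1, h2', h3⟩ := hmain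
    refine ⟨i₀, h1, ?_, h3⟩
    have : (i₀:ℝ) ≤ (T:ℝ) := by exact_mod_cast h2'
    linarith
  by_contra hcon
  push_neg at hcon
  have H : ∀ i, 1 ≤ i → i ≤ T → w' < x i := hcon
  -- step extractors
  have hQ : ∀ i, 1 ≤ i → w' ≤ x i / (2:ℝ) ^ (2 ^ nn i) →
      x (i+1) ≤ x i / (2:ℝ) ^ (2 ^ nn i) ∧ nn (i+1) = nn i + 1 := by
    intro i hi hq
    have h := hstep i hi
    rw [if_pos hq] at h
    exact ⟨h.2.1, h.2.2⟩
  have hLin : ∀ i, 1 ≤ i → ¬ (w' ≤ x i / (2:ℝ) ^ (2 ^ nn i)) →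
      x (i+1) ≤ x i / 2 ∧ nn (i+1) = max 1 (nn i - 1) := by
    intro i hi hq
    have h := hstep i hi
    rw [if_neg hq] at h
    exact ⟨h.2.1, h.2.2⟩
  have hnn1 : ∀ i, 1 ≤ i → 1 ≤ nn i := by
    intro i hi
    induction i, hi using Nat.le_induction with
    | base => rw [hn1]; exact hm
    | succ j hj ih =>
      by_cases hq : w' ≤ x j / (2:ℝ) ^ (2 ^ nn j)
      · rw [(hQ j hj hq).2]; omega
      · rw [(hLin j hj hq).2]; omega
  -- each step at least halves x (while above w')
  have hhalf : ∀ i, 1 ≤ i → i + 1 ≤ T → x (i+1) ≤ x i / 2 := by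
    intro i hi hiT
    have hxi : 0 < x i := lt_trans hw' (H i hi (by omega))
    by_cases hq : w' ≤ x i / (2:ℝ) ^ (2 ^ nn i)
    · have h1 := (hQ i hi hq).1
      have h4 : (2:ℝ) ≤ (2:ℝ) ^ (2 ^ nn i) := by
        calc (2:ℝ) = 2 ^ (1:ℕ) := (pow_one 2).symm
          _ ≤ 2 ^ (2 ^ nn i) := by
            apply pow_le_pow_right₀ one_le_two
            have h5 := hnn1 i hi
            have h6 := Nat.lt_two_pow_self (n := nn i)
            omega
      have : x i / (2:ℝ) ^ (2 ^ nn i) ≤ x i / 2 :=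
        div_le_div_of_nonneg_left hxi.le two_pos h4
      linarith
    · exact (hLin i hi hq).1
  have hmono : ∀ i j, 1 ≤ i → i ≤ j → j ≤ T → x j ≤ x i := by
    intro i j hi hij hjT
    induction j with
    | zero => omega
    | succ k ih =>
      rcases Nat.eq_or_lt_of_le hij with h | h
      · rw [h]
      · have hk : i ≤ k := by omega
        have hk1 : 1 ≤ k := by omega
        have h1 : x (k+1) ≤ x k / 2 := hhalf k hk1 hjT
        have hxk : 0 < x k := lt_trans hw' (H k hk1 (by omega))
        have h2'' := ih hk (by omega)
        linarith
  have hxw : ∀ i, 1 ≤ i → i ≤ T → x i ≤ w := by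
    intro i h1 h2'
    have := hmono 1 i le_rfl h1 h2'
    rwa [hx1] at this
  -- at a quadratic step, nn i ≤ Λ
  have hQnL : ∀ i, 1 ≤ i → i ≤ T → w' ≤ x i / (2:ℝ) ^ (2 ^ nn i) → nn i ≤ Λ := by
    intro i hi hiT hq
    have hc : (0:ℝ) < (2:ℝ) ^ (2 ^ nn i) := by positivity
    rw [le_div_iff₀ hc] at hq
    have h1 : (2:ℝ) ^ (2 ^ nn i) ≤ K := by
      have hxiw : x i ≤ w := hxw i hi hiT
      have h1' : (2:ℝ) ^ (2 ^ nn i) ≤ w / w' := by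
        rw [le_div_iff₀ hw']
        calc (2:ℝ) ^ (2 ^ nn i) * w' = w' * (2:ℝ) ^ (2 ^ nn i) := mul_comm _ _
          _ ≤ x i := hq
          _ ≤ w := hxiw
      exact le_trans h1' (le_max_right _ _)
    have h3 : ((2:ℝ) ^ (nn i : ℕ)) ≤ Real.logb 2 K := by
      have h := Real.logb_le_logb_of_le h2 hc h1
      rw [Real.logb_pow, Real.logb_self_eq_one h2, mul_one] at h
      calc (2:ℝ) ^ (nn i : ℕ) = ((2 ^ nn i : ℕ) : ℝ) := by push_cast; ring
        _ ≤ Real.logb 2 K := h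
    have h4 : (nn i : ℝ) ≤ L := by
      have hpos : (0:ℝ) < (2:ℝ) ^ (nn i : ℕ) := by positivity
      have h := Real.logb_le_logb_of_le h2 hpos h3
      rw [Real.logb_pow, Real.logb_self_eq_one h2, mul_one] at h
      exact h
    exact Nat.le_floor h4
  set M : ℕ := max m (Λ + 1) with hMdef
  have hnM : ∀ i, 1 ≤ i → i ≤ T → nn i ≤ M := by
    intro i hi
    induction i, hi using Nat.le_induction with
    | base => intro _; rw [hn1]; exact le_max_left _ _
    | succ j hj ih =>
      intro hjT1
      have hjT : j ≤ T := by omega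
      by_cases hq : w' ≤ x j / (2:ℝ) ^ (2 ^ nn j)
      · have h1 := hQnL j hj hjT hq
        rw [(hQ j hj hq).2]; omega
      · rw [(hLin j hj hq).2]
        have := ih hjT
        omega
  -- the step-classification finsets
  set Qp : ℕ → Prop := fun j => w' ≤ x (j+1) / (2:ℝ) ^ (2 ^ nn (j+1)) with hQpdef
  set s : Finset ℕ := Finset.range (T-1) with hsdef
  set A : Finset ℕ := s.filter Qp with hAdef
  set F : Finset ℕ := s.filter (fun j => ¬ Qp j) with hFdef
  set Bs : Finset ℕ := F.filter (fun j => 2 ≤ nn (j+1)) with hBsdef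
  set Cs : Finset ℕ := F.filter (fun j => ¬ 2 ≤ nn (j+1)) with hCsdef
  have hcard1 : A.card + F.card = s.card :=
    Finset.card_filter_add_card_filter_not Qp
  have hcard2 : Bs.card + Cs.card = F.card :=
    Finset.card_filter_add_card_filter_not _
  have hscard : s.card = T - 1 := Finset.card_range _
  -- telescoping sum
  have htel : ∑ j ∈ s, ((nn (j+1+1) : ℤ) - (nn (j+1) : ℤ)) = (nn T : ℤ) - (m : ℤ) := by
    have h := Finset.sum_range_sub (fun j => (nn (j+1) : ℤ)) (T-1)
    rw [hsdef, h, show T - 1 + 1 = T by omega, hn1]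
  have hAsum : ∑ j ∈ A, ((nn (j+1+1) : ℤ) - (nn (j+1) : ℤ)) = (A.card : ℤ) := by
    have hc : ∀ j ∈ A, ((nn (j+1+1) : ℤ) - (nn (j+1) : ℤ)) = 1 := by
      intro j hj
      obtain ⟨hjs, hq⟩ := Finset.mem_filter.mp hj
      have hn' := (hQ (j+1) (by omega) hq).2
      omega
    rw [Finset.sum_congr rfl hc]
    simp
  have hBsum : ∑ j ∈ Bs, ((nn (j+1+1) : ℤ) - (nn (j+1) : ℤ)) = -(Bs.card : ℤ) := by
    have hc : ∀ j ∈ Bs, ((nn (j+1+1) : ℤ) - (nn (j+1) : ℤ)) = -1 := by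
      intro j hj
      obtain ⟨hjF, hn2⟩ := Finset.mem_filter.mp hj
      obtain ⟨hjs, hq⟩ := Finset.mem_filter.mp hjF
      have hn' := (hLin (j+1) (by omega) hq).2
      omega
    rw [Finset.sum_congr rfl hc]
    simp
  have hCsum : ∑ j ∈ Cs, ((nn (j+1+1) : ℤ) - (nn (j+1) : ℤ)) = 0 := by
    apply Finset.sum_eq_zero
    intro j hj
    obtain ⟨hjF, hn2⟩ := Finset.mem_filter.mp hj
    obtain ⟨hjs, hq⟩ := Finset.mem_filter.mp hjF
    have hn' := (hLin (j+1) (by omega) hq).2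
    have := hnn1 (j+1) (by omega)
    omega
  have hkey : (A.card : ℤ) - (Bs.card : ℤ) = (nn T : ℤ) - (m : ℤ) := by
    have hsp : ∑ j ∈ s, ((nn (j+1+1) : ℤ) - (nn (j+1) : ℤ))
        = ∑ j ∈ A, ((nn (j+1+1) : ℤ) - (nn (j+1) : ℤ))
          + ∑ j ∈ F, ((nn (j+1+1) : ℤ) - (nn (j+1) : ℤ)) :=
      (Finset.sum_filter_add_sum_filter_not s Qp _).symm
    have hfp : ∑ j ∈ F, ((nn (j+1+1) : ℤ) - (nn (j+1) : ℤ))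
        = ∑ j ∈ Bs, ((nn (j+1+1) : ℤ) - (nn (j+1) : ℤ))
          + ∑ j ∈ Cs, ((nn (j+1+1) : ℤ) - (nn (j+1) : ℤ)) :=
      (Finset.sum_filter_add_sum_filter_not F _ _).symm
    rw [htel, hsp, hfp, hAsum, hBsum, hCsum] at *
    omega
  -- at most one linear step with nn = 1
  have hCkey : ∀ j ∈ Cs, x (j+1+1) < 2 * w' := by
    intro j hj
    obtain ⟨hjF, hn2⟩ := Finset.mem_filter.mp hj
    obtain ⟨hjs, hq⟩ := Finset.mem_filter.mp hjF
    have hjr : j < T - 1 := Finset.mem_range.mp hjs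
    have hnj : nn (j+1) = 1 := by have := hnn1 (j+1) (by omega); omega
    have hc : (0:ℝ) < (2:ℝ) ^ (2 ^ nn (j+1)) := by positivity
    have hxlt : x (j+1) < w' * (2:ℝ) ^ (2 ^ nn (j+1)) :=
      (div_lt_iff₀ hc).mp (not_le.mp hq)
    have h4 : ((2:ℝ) ^ (2 ^ nn (j+1)) : ℝ) = 4 := by rw [hnj]; norm_num
    have hstep' := (hLin (j+1) (by omega) hq).1
    rw [h4] at hxlt
    linarith
  have hCne : ∀ a ∈ Cs, ∀ b ∈ Cs, a < b → False := by
    intro a ha b hb hab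
    have h1 := hCkey a ha
    obtain ⟨hbF, hb2⟩ := Finset.mem_filter.mp hb
    obtain ⟨hbs, hbq⟩ := Finset.mem_filter.mp hbF
    have hbr : b < T - 1 := Finset.mem_range.mp hbs
    have h2' : x (b+1) ≤ x (a+1+1) := hmono (a+1+1) (b+1) (by omega) (by omega) (by omega)
    have h3 : x (b+1+1) ≤ x (b+1) / 2 := (hLin (b+1) (by omega) hbq).1
    have h4 : w' < x (b+1+1) := H (b+1+1) (by omega) (by omega)
    linarith
  have hCs1 : Cs.card ≤ 1 := by
    rw [Finset.card_le_one]
    intro a ha b hb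
    rcases lt_trichotomy a b with h | h | h
    · exact absurd (hCne a ha b hb h) (by simp)
    · exact h
    · exact absurd (hCne b hb a ha h) (by simp)
  -- case split on existence of a linear step
  by_cases hFne : F.Nonempty
  case neg =>
    -- all steps quadratic
    have hFe : F = ∅ := Finset.not_nonempty_iff_eq_empty.mp hFne
    have hallq : ∀ j, j < T - 1 → Qp j := by
      intro j hj
      by_contra hq
      have : j ∈ F := Finset.mem_filter.mpr ⟨Finset.mem_range.mpr hj, hq⟩
      rw [hFe] at this
      exact absurd this (Finset.notMem_empty j)
    have hinit : ∀ j, j ≤ T - 1 → nn (j+1) = m + j := by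
      intro j hj
      induction j with
      | zero => simpa using hn1
      | succ k ih =>
        have hk : k < T - 1 := by omega
        have hqk := hallq k hk
        have := (hQ (k+1) (by omega) hqk).2
        rw [this, ih (by omega)]
        omega
    have hq' := hallq (T-2) (by omega)
    have hle := hQnL (T-2+1) (by omega) (by omega) hq'
    rw [hinit (T-2) (by omega)] at hle
    -- m + (T-2) ≤ Λ : contradiction with T large
    have hreal : (m:ℝ) + ((T:ℝ) - 2) ≤ (Λ:ℝ) := by
      have : ((m + (T-2) : ℕ) : ℝ) ≤ (Λ:ℝ) := by exact_mod_cast hle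
      push_cast [Nat.cast_sub (show 2 ≤ T by omega)] at this
      linarith
    have hT' : (16:ℝ) ≤ (T:ℝ) := by exact_mod_cast hT16
    linarith
  case pos =>
    set j₁ : ℕ := F.min' hFne with hj₁def
    have hj₁mem : j₁ ∈ F := F.min'_mem hFne
    obtain ⟨hj₁s, hj₁q⟩ := Finset.mem_filter.mp hj₁mem
    have hj₁r : j₁ < T - 1 := Finset.mem_range.mp hj₁s
    have hminimal : ∀ j, j < j₁ → Qp j := by
      intro j hj
      by_contra hq
      have hjs : j ∈ s := Finset.mem_range.mpr (by omega)
      have : j ∈ F := Finset.mem_filter.mpr ⟨hjs, hq⟩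
      have := F.min'_le j this
      omega
    have hinit : ∀ j, j ≤ j₁ → nn (j+1) = m + j := by
      intro j hj
      induction j with
      | zero => simpa using hn1
      | succ k ih =>
        have hqk := hminimal k (by omega)
        have := (hQ (k+1) (by omega) hqk).2
        rw [this, ih (by omega)]
        omega
    have hj₁Λ : j₁ ≤ Λ := by
      rcases Nat.eq_zero_or_pos j₁ with h | h
      · omega
      · have hqk := hminimal (j₁ - 1) (by omega)
        have hle := hQnL (j₁-1+1) (by omega) (by omega) hqk
        rw [hinit (j₁-1) (by omega)] at hle
        omega
    -- the invariant after the first linear step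
    have hSt : ∀ i, j₁ + 1 ≤ i → i ≤ T → x i < w' * (2:ℝ) ^ (2 ^ (nn i + 1)) := by
      intro i hi
      induction i, hi using Nat.le_induction with
      | base =>
        intro _
        have hc : (0:ℝ) < (2:ℝ) ^ (2 ^ nn (j₁+1)) := by positivity
        have hxlt : x (j₁+1) < w' * (2:ℝ) ^ (2 ^ nn (j₁+1)) :=
          (div_lt_iff₀ hc).mp (not_le.mp hj₁q)
        have hle : (2:ℝ) ^ (2 ^ nn (j₁+1)) ≤ (2:ℝ) ^ (2 ^ (nn (j₁+1) + 1)) :=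
          pow_le_pow_right₀ one_le_two (Nat.pow_le_pow_right (by norm_num) (by omega))
        have := mul_le_mul_of_nonneg_left hle hw'.le
        linarith
      | succ i hi ih =>
        intro hiT1
        have hiT : i ≤ T := by omega
        have hi1 : 1 ≤ i := by omega
        have hSti := ih hiT
        by_cases hq : w' ≤ x i / (2:ℝ) ^ (2 ^ nn i)
        · obtain ⟨hx', hn'⟩ := hQ i hi1 hq
          have hc : (0:ℝ) < (2:ℝ) ^ (2 ^ nn i) := by positivity
          have heq : ((2:ℝ) ^ (2 ^ (nn i + 1)) : ℝ)
              = (2:ℝ) ^ (2 ^ nn i) * (2:ℝ) ^ (2 ^ nn i) := by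
            rw [← pow_add]
            congr 1
            omega
          have key : x (i+1) < w' * (2:ℝ) ^ (2 ^ nn i) := by
            have h1 : x i / (2:ℝ) ^ (2 ^ nn i) < w' * (2:ℝ) ^ (2 ^ nn i) := by
              rw [div_lt_iff₀ hc]
              calc x i < w' * (2:ℝ) ^ (2 ^ (nn i + 1)) := hSti
                _ = w' * (2:ℝ) ^ (2 ^ nn i) * (2:ℝ) ^ (2 ^ nn i) := by
                    rw [heq, mul_assoc]
            linarith
          rw [hn']
          have hle : (2:ℝ) ^ (2 ^ nn i) ≤ (2:ℝ) ^ (2 ^ (nn i + 1 + 1)) :=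
            pow_le_pow_right₀ one_le_two (Nat.pow_le_pow_right (by norm_num) (by omega))
          have := mul_le_mul_of_nonneg_left hle hw'.le
          linarith
        · obtain ⟨hx', hn'⟩ := hLin i hi1 hq
          have hc : (0:ℝ) < (2:ℝ) ^ (2 ^ nn i) := by positivity
          have hxlt : x i < w' * (2:ℝ) ^ (2 ^ nn i) :=
            (div_lt_iff₀ hc).mp (not_le.mp hq)
          have hxi : 0 < x i := lt_trans hw' (H i hi1 hiT)
          rw [hn']
          have hle : (2:ℝ) ^ (2 ^ nn i) ≤ (2:ℝ) ^ (2 ^ (max 1 (nn i - 1) + 1)) :=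
            pow_le_pow_right₀ one_le_two (Nat.pow_le_pow_right (by norm_num) (by omega))
          have := mul_le_mul_of_nonneg_left hle hw'.le
          linarith
    -- after a quadratic step beyond j₁, x drops below w'·2^(2^n)
    have hpost : ∀ j, j ∈ A → j₁ < j → x (j+1+1) < w' * (2:ℝ) ^ (2 ^ nn (j+1)) := by
      intro j hj hjgt
      obtain ⟨hjs, hq⟩ := Finset.mem_filter.mp hj
      have hjr : j < T - 1 := Finset.mem_range.mp hjs
      have hSt' := hSt (j+1) (by omega) (by omega)
      obtain ⟨hx', _⟩ := hQ (j+1) (by omega) hq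
      have hc : (0:ℝ) < (2:ℝ) ^ (2 ^ nn (j+1)) := by positivity
      have heq : ((2:ℝ) ^ (2 ^ (nn (j+1) + 1)) : ℝ)
          = (2:ℝ) ^ (2 ^ nn (j+1)) * (2:ℝ) ^ (2 ^ nn (j+1)) := by
        rw [← pow_add]
        congr 1
        omega
      have h1 : x (j+1) / (2:ℝ) ^ (2 ^ nn (j+1)) < w' * (2:ℝ) ^ (2 ^ nn (j+1)) := by
        rw [div_lt_iff₀ hc]
        calc x (j+1) < w' * (2:ℝ) ^ (2 ^ (nn (j+1) + 1)) := hSt'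
          _ = w' * (2:ℝ) ^ (2 ^ nn (j+1)) * (2:ℝ) ^ (2 ^ nn (j+1)) := by
              rw [heq, mul_assoc]
      linarith
    -- the indices of quadratic steps after j₁ have strictly decreasing nn-values
    set Aa : Finset ℕ := A.filter (fun j => j₁ < j) with hAadef
    have hanti : ∀ j ∈ Aa, ∀ j' ∈ Aa, j < j' → nn (j'+1) < nn (j+1) := by
      intro j hj j' hj' hlt
      obtain ⟨hjA, hjgt⟩ := Finset.mem_filter.mp hj
      obtain ⟨hj'A, hj'gt⟩ := Finset.mem_filter.mp hj'
      obtain ⟨hj's, hq'⟩ := Finset.mem_filter.mp hj'A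
      have hj'r : j' < T - 1 := Finset.mem_range.mp hj's
      have h1 := hpost j hjA hjgt
      have hc : (0:ℝ) < (2:ℝ) ^ (2 ^ nn (j'+1)) := by positivity
      have h2' : w' * (2:ℝ) ^ (2 ^ nn (j'+1)) ≤ x (j'+1) := (le_div_iff₀ hc).mp hq'
      have h3 : x (j'+1) ≤ x (j+1+1) := hmono (j+1+1) (j'+1) (by omega) (by omega) (by omega)
      by_contra hcon'
      push_neg at hcon'
      have h5 : (2:ℕ) ^ nn (j+1) ≤ 2 ^ nn (j'+1) :=
        Nat.pow_le_pow_right (by norm_num) hcon'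
      have h6 : (2:ℝ) ^ (2 ^ nn (j+1)) ≤ (2:ℝ) ^ (2 ^ nn (j'+1)) :=
        pow_le_pow_right₀ one_le_two h5
      have := mul_le_mul_of_nonneg_left h6 hw'.le
      linarith
    have hAacard : Aa.card ≤ M := by
      have hmaps : ∀ j ∈ Aa, nn (j+1) ∈ Finset.Icc 1 M := by
        intro j hj
        obtain ⟨hjA, _⟩ := Finset.mem_filter.mp hj
        obtain ⟨hjs, _⟩ := Finset.mem_filter.mp hjA
        have hjr : j < T - 1 := Finset.mem_range.mp hjs
        exact Finset.mem_Icc.mpr ⟨hnn1 (j+1) (by omega), hnM (j+1) (by omega) (by omega)⟩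
      have hinj : Set.InjOn (fun j => nn (j+1)) ↑Aa := by
        intro a ha b hb hab
        simp only [Finset.mem_coe] at ha hb
        simp only at hab
        rcases lt_trichotomy a b with h | h | h
        · have := hanti a ha b hb h; omega
        · exact h
        · have := hanti b hb a ha h; omega
      calc Aa.card ≤ (Finset.Icc 1 M).card :=
            Finset.card_le_card_of_injOn _ hmaps hinj
        _ = M := by rw [Nat.card_Icc]; omega
    have hAcard : A.card ≤ j₁ + M := by
      have hsub : A ⊆ Finset.range j₁ ∪ Aa := by
        intro j hj
        rcases lt_trichotomy j j₁ with h | h | h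
        · exact Finset.mem_union_left _ (Finset.mem_range.mpr h)
        · exfalso
          obtain ⟨_, hq⟩ := Finset.mem_filter.mp hj
          rw [h] at hq
          exact hj₁q hq
        · exact Finset.mem_union_right _ (Finset.mem_filter.mpr ⟨hj, h⟩)
      calc A.card ≤ (Finset.range j₁ ∪ Aa).card := Finset.card_le_card hsub
        _ ≤ (Finset.range j₁).card + Aa.card := Finset.card_union_le _ _
        _ = j₁ + Aa.card := by rw [Finset.card_range]
        _ ≤ j₁ + M := by omega
    -- final counting
    have hnnT : 1 ≤ nn T := hnn1 T (by omega)
    have hTnat : T ≤ 3 * m + 4 * Λ + 1 := by omega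
    have hreal : (T:ℝ) ≤ 3 * (m:ℝ) + 4 * (Λ:ℝ) + 1 := by exact_mod_cast hTnat
    linarith
end

section
/- Let F = a·∏_{i=1}^n (X − z_i) ∈ ℂ[X] with a ≠ 0 and n = deg F ≥ 2, where z_1,…,z_n are the roots listed with multiplicity. Let k be an integer with 1 ≤ k ≤ n, let m'' ∈ ℂ, r > 0, N ∈ ℝ with N ≥ 1, and let x ∈ ℂ. Assume: |x − m''| ≤ 4r; |z_i − m''| ≤ r/(2^{20}·n·N) for 1 ≤ i ≤ k; |x − z_i| ≥ r/(27·n) for 1 ≤ i ≤ k; and |x − z_i| ≥ 2^{19}·n²·N·r for k < i ≤ n. Then F(x) ≠ 0, F'(x) ≠ 0, |(x − m'')·F'(x)/(k·F(x)) − 1| ≤ 2^{−14}/N, and the Newton iterate x' := x − k·F(x)/F'(x) satisfies |x' − m''| ≤ r/(2^{11}·N). -/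
open Polynomial Finset


private lemma derivative_prod_finset {ι : Type*} [DecidableEq ι] (s : Finset ι)
    (f : ι → Polynomial ℂ) :
    Polynomial.derivative (∏ i ∈ s, f i)
      = ∑ i ∈ s, (∏ j ∈ s.erase i, f j) * Polynomial.derivative (f i) := by
  induction s using Finset.induction_on with
  | empty => simp
  | @insert a s h ih =>
    rw [Finset.prod_insert h, Polynomial.derivative_mul, ih, Finset.sum_insert h,
      Finset.erase_insert h, Finset.mul_sum]
    have hterm : ∀ i ∈ s, f a * ((∏ j ∈ s.erase i, f j) * Polynomial.derivative (f i))
        = (∏ j ∈ (insert a s).erase i, f j) * Polynomial.derivative (f i) := by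
      intro i hi
      have hia : i ≠ a := fun h' => h (h' ▸ hi)
      rw [Finset.erase_insert_of_ne hia.symm,
        Finset.prod_insert (fun h' => h (Finset.mem_of_mem_erase h'))]
      ring
    rw [Finset.sum_congr rfl hterm]
    ring


/-- **Quantitative Newton step towards a cluster** (key estimate in the proof of
Lemma `newtonsucceeds`): if the roots `z_1, …, z_k` of `F = a·∏ (X − z_i)` form a
cluster of radius `r/(2^{20}nN)` around `m''`, the point `x` is within distance `4r`
of `m''` but at distance at least `r/(27n)` from each of `z_1, …, z_k`, and all
remaining roots are at distance at least `2^{19}n²Nr` from `x`, then `F(x) ≠ 0`,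
`F'(x) ≠ 0`, `|(x − m'')·F'(x)/(k·F(x)) − 1| ≤ 2^{−14}/N`, and the Newton iterate
`x' := x − k·F(x)/F'(x)` satisfies `|x' − m''| ≤ r/(2^{11}·N)`. -/
theorem newton_step_estimate (n : ℕ) (hn : 2 ≤ n) (a : ℂ) (ha : a ≠ 0) (z : ℕ → ℂ)
    (F : Polynomial ℂ)
    (hF : F = Polynomial.C a * ∏ i ∈ Finset.range n, (Polynomial.X - Polynomial.C (z i)))
    (k : ℕ) (hk1 : 1 ≤ k) (hk : k ≤ n)
    (m'' x : ℂ) (r : ℝ) (hr : 0 < r) (N : ℝ) (hN : 1 ≤ N)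
    (hx : ‖x - m''‖ ≤ 4 * r)
    (hcluster : ∀ i, i < k → ‖z i - m''‖ ≤ r / (2 ^ 20 * n * N))
    (hfar : ∀ i, i < k → r / (27 * n) ≤ ‖x - z i‖)
    (hrest : ∀ i, k ≤ i → i < n → 2 ^ 19 * n ^ 2 * N * r ≤ ‖x - z i‖) :
    F.eval x ≠ 0 ∧ (Polynomial.derivative F).eval x ≠ 0 ∧
    ‖(x - m'') * (Polynomial.derivative F).eval x / ((k : ℂ) * F.eval x) - 1‖ ≤
      1 / (2 ^ 14 * N) ∧
    ‖(x - (k : ℂ) * F.eval x / (Polynomial.derivative F).eval x) - m''‖ ≤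
      r / (2 ^ 11 * N) := by
  classical
  have hnR : (2:ℝ) ≤ (n:ℝ) := by exact_mod_cast hn
  have hnpos : (0:ℝ) < (n:ℝ) := by linarith
  have hkR : (1:ℝ) ≤ (k:ℝ) := by exact_mod_cast hk1
  have hkpos : (0:ℝ) < (k:ℝ) := by linarith
  have hkC : (k:ℂ) ≠ 0 := Nat.cast_ne_zero.mpr (by omega)
  have hNpos : (0:ℝ) < N := by linarith
  -- nonvanishing factors
  have hne : ∀ i, i < n → x - z i ≠ 0 := by
    intro i hi
    rcases lt_or_ge i k with h1 | h1
    · have h2 := hfar i h1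
      have h3 : (0:ℝ) < r / (27 * n) := by positivity
      intro h
      rw [h, norm_zero] at h2
      linarith
    · have h2 := hrest i h1 hi
      have h3 : (0:ℝ) < 2 ^ 19 * (n:ℝ) ^ 2 * N * r := by positivity
      intro h
      rw [h, norm_zero] at h2
      linarith
  set S : ℂ := ∑ i ∈ Finset.range n, (x - z i)⁻¹ with hS
  have hFx : F.eval x = a * ∏ i ∈ Finset.range n, (x - z i) := by
    simp [hF, Polynomial.eval_prod]
  have hprod_ne : ∏ i ∈ Finset.range n, (x - z i) ≠ 0 :=
    Finset.prod_ne_zero_iff.mpr (fun i hi => hne i (Finset.mem_range.mp hi))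
  have hF0 : F.eval x ≠ 0 := by rw [hFx]; exact mul_ne_zero ha hprod_ne
  have key : ∀ i ∈ Finset.range n,
      ∏ j ∈ (Finset.range n).erase i, (x - z j)
        = (∏ j ∈ Finset.range n, (x - z j)) * (x - z i)⁻¹ := by
    intro i hi
    have h1 := Finset.mul_prod_erase (Finset.range n) (fun j => x - z j) hi
    have h2 := hne i (Finset.mem_range.mp hi)
    rw [← h1, mul_comm (x - z i), mul_assoc, mul_inv_cancel₀ h2, mul_one]
  have hF'x : (Polynomial.derivative F).eval x = F.eval x * S := by
    rw [hF, Polynomial.derivative_C_mul, Polynomial.eval_mul, Polynomial.eval_C,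
      _root_.derivative_prod_finset]
    simp only [Polynomial.derivative_sub, Polynomial.derivative_X, Polynomial.derivative_C,
      sub_zero, mul_one, Polynomial.eval_finset_sum, Polynomial.eval_prod,
      Polynomial.eval_sub, Polynomial.eval_X, Polynomial.eval_C]
    rw [Finset.sum_congr rfl key, ← Finset.mul_sum, ← hS]
    simp only [Polynomial.eval_mul, Polynomial.eval_C, Polynomial.eval_prod,
      Polynomial.eval_sub, Polynomial.eval_X]
    ring
  set u : ℂ := (x - m'') / k * S with hu
  have hsplit : S = (∑ i ∈ Finset.range k, (x - z i)⁻¹)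
      + ∑ i ∈ Finset.Ico k n, (x - z i)⁻¹ := by
    rw [hS, Finset.range_eq_Ico, ← Finset.sum_Ico_consecutive _ (Nat.zero_le k) hk,
      ← Finset.range_eq_Ico]
  have hGeq : u - 1 = (∑ i ∈ Finset.range k, (z i - m'') * (x - z i)⁻¹) / k
      + (x - m'') / k * ∑ i ∈ Finset.Ico k n, (x - z i)⁻¹ := by
    have h1 : ∑ i ∈ Finset.range k, (z i - m'') * (x - z i)⁻¹
        = ∑ i ∈ Finset.range k, ((x - m'') * (x - z i)⁻¹ - 1) := by
      refine Finset.sum_congr rfl fun i hi => ?_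
      have h2 := hne i (lt_of_lt_of_le (Finset.mem_range.mp hi) hk)
      field_simp
      ring
    have h2 : ∑ i ∈ Finset.range k, ((x - m'') * (x - z i)⁻¹ - 1)
        = (x - m'') * (∑ i ∈ Finset.range k, (x - z i)⁻¹) - k := by
      rw [Finset.sum_sub_distrib, ← Finset.mul_sum, Finset.sum_const, Finset.card_range,
        nsmul_eq_mul, mul_one]
    rw [h1, h2, hu, hsplit]
    field_simp
    ring
  -- bound the first sum
  have hsum1 : ‖∑ i ∈ Finset.range k, (z i - m'') * (x - z i)⁻¹‖
      ≤ k * (27 / (2 ^ 20 * N)) := by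
    calc ‖∑ i ∈ Finset.range k, (z i - m'') * (x - z i)⁻¹‖
        ≤ ∑ i ∈ Finset.range k, ‖(z i - m'') * (x - z i)⁻¹‖ :=
          norm_sum_le _ _
      _ ≤ ∑ _i ∈ Finset.range k, 27 / (2 ^ 20 * N) := by
          refine Finset.sum_le_sum fun i hi => ?_
          have hi' := Finset.mem_range.mp hi
          have h1 := hcluster i hi'
          have h2 := hfar i hi'
          have h3 : (0:ℝ) < r / (27 * n) := by positivity
          rw [norm_mul, norm_inv]
          have h4 : (‖x - z i‖)⁻¹ ≤ (r / (27 * n))⁻¹ :=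
            inv_anti₀ h3 h2
          calc ‖z i - m''‖ * (‖x - z i‖)⁻¹
              ≤ (r / (2 ^ 20 * n * N)) * (r / (27 * n))⁻¹ :=
                mul_le_mul h1 h4 (by positivity) (by positivity)
            _ = 27 / (2 ^ 20 * N) := by
                field_simp
      _ = k * (27 / (2 ^ 20 * N)) := by
          rw [Finset.sum_const, Finset.card_range, nsmul_eq_mul]
  -- bound the second sum
  have hsum2 : ‖∑ i ∈ Finset.Ico k n, (x - z i)⁻¹‖
      ≤ n * (2 ^ 19 * (n:ℝ) ^ 2 * N * r)⁻¹ := by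
    have hC : (0:ℝ) < 2 ^ 19 * (n:ℝ) ^ 2 * N * r := by positivity
    calc ‖∑ i ∈ Finset.Ico k n, (x - z i)⁻¹‖
        ≤ ∑ i ∈ Finset.Ico k n, ‖(x - z i)⁻¹‖ := norm_sum_le _ _
      _ ≤ ∑ _i ∈ Finset.Ico k n, (2 ^ 19 * (n:ℝ) ^ 2 * N * r)⁻¹ := by
          refine Finset.sum_le_sum fun i hi => ?_
          obtain ⟨h1, h2⟩ := Finset.mem_Ico.mp hi
          rw [norm_inv]
          exact inv_anti₀ hC (hrest i h1 h2)
      _ = (n - k : ℕ) * (2 ^ 19 * (n:ℝ) ^ 2 * N * r)⁻¹ := by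
          rw [Finset.sum_const, Nat.card_Ico, nsmul_eq_mul]
      _ ≤ n * (2 ^ 19 * (n:ℝ) ^ 2 * N * r)⁻¹ := by
          have : ((n - k : ℕ) : ℝ) ≤ (n : ℝ) := by
            exact_mod_cast Nat.sub_le n k
          exact mul_le_mul_of_nonneg_right this (by positivity)
  -- combine
  have hub : ‖u - 1‖ ≤ 31 / (2 ^ 20 * N) := by
    rw [hGeq]
    have t1 : ‖(∑ i ∈ Finset.range k, (z i - m'') * (x - z i)⁻¹) / k‖
        ≤ 27 / (2 ^ 20 * N) := by
      rw [norm_div, Complex.norm_natCast]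
      rw [div_le_iff₀ hkpos]
      calc ‖∑ i ∈ Finset.range k, (z i - m'') * (x - z i)⁻¹‖
          ≤ k * (27 / (2 ^ 20 * N)) := hsum1
        _ = 27 / (2 ^ 20 * N) * k := by ring
    have t2 : ‖(x - m'') / k * ∑ i ∈ Finset.Ico k n, (x - z i)⁻¹‖
        ≤ 4 / (2 ^ 20 * N) := by
      rw [norm_mul, norm_div, Complex.norm_natCast]
      have h1 : ‖x - m''‖ / k ≤ 4 * r := by
        rw [div_le_iff₀ hkpos]
        calc ‖x - m''‖ ≤ 4 * r := hx
          _ = 4 * r * 1 := by ring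
          _ ≤ 4 * r * k := by nlinarith
      calc ‖x - m''‖ / k * ‖∑ i ∈ Finset.Ico k n, (x - z i)⁻¹‖
          ≤ (4 * r) * (n * (2 ^ 19 * (n:ℝ) ^ 2 * N * r)⁻¹) :=
            mul_le_mul h1 hsum2 (by positivity) (by positivity)
        _ = 4 / (2 ^ 19 * n * N) := by
            field_simp
        _ ≤ 4 / (2 ^ 20 * N) := by
            apply div_le_div_of_nonneg_left (by norm_num) (by positivity)
            nlinarith
    calc ‖(∑ i ∈ Finset.range k, (z i - m'') * (x - z i)⁻¹) / k
          + (x - m'') / k * ∑ i ∈ Finset.Ico k n, (x - z i)⁻¹‖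
        ≤ ‖(∑ i ∈ Finset.range k, (z i - m'') * (x - z i)⁻¹) / k‖
          + ‖(x - m'') / k * ∑ i ∈ Finset.Ico k n, (x - z i)⁻¹‖ :=
          norm_add_le _ _
      _ ≤ 27 / (2 ^ 20 * N) + 4 / (2 ^ 20 * N) := add_le_add t1 t2
      _ = 31 / (2 ^ 20 * N) := by ring
  have hu1 : ‖u - 1‖ ≤ 1 / (2 ^ 14 * N) := by
    refine le_trans hub ?_
    rw [div_le_div_iff₀ (by positivity) (by positivity)]
    nlinarith
  have huhalf : ‖u - 1‖ ≤ 1 / 2 := by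
    refine le_trans hu1 ?_
    rw [div_le_div_iff₀ (by positivity) (by norm_num)]
    nlinarith
  have hulb : (1:ℝ) / 2 ≤ ‖u‖ := by
    have h2 := norm_add_le (1 - u) u
    rw [sub_add_cancel, norm_one, norm_sub_rev] at h2
    linarith
  have hu0 : u ≠ 0 := by
    intro h
    rw [h, norm_zero] at hulb
    linarith
  have hS0 : S ≠ 0 := by
    intro h
    apply hu0
    rw [hu, h, mul_zero]
  have hxm : x - m'' ≠ 0 := by
    intro h
    apply hu0
    rw [hu, h, zero_div, zero_mul]
  have hF'0 : (Polynomial.derivative F).eval x ≠ 0 := by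
    rw [hF'x]; exact mul_ne_zero hF0 hS0
  refine ⟨hF0, hF'0, ?_, ?_⟩
  · have hq : (x - m'') * (Polynomial.derivative F).eval x / ((k:ℂ) * F.eval x) = u := by
      rw [hF'x, hu]
      field_simp
    rw [hq]
    exact hu1
  · have hx' : (x - (k:ℂ) * F.eval x / (Polynomial.derivative F).eval x) - m''
        = (x - m'') * (u - 1) / u := by
      rw [hF'x, hu]
      field_simp
      ring
    rw [hx', norm_div, norm_mul]
    have h1 : ‖x - m''‖ * ‖u - 1‖ ≤ 4 * r * (31 / (2 ^ 20 * N)) :=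
      mul_le_mul hx hub (by positivity) (by positivity)
    calc ‖x - m''‖ * ‖u - 1‖ / ‖u‖
        ≤ (4 * r * (31 / (2 ^ 20 * N))) / (1 / 2) :=
          div_le_div₀ (by positivity) h1 (by norm_num) hulb
      _ = (31 / 64) * (r / (2 ^ 11 * N)) := by ring
      _ ≤ 1 * (r / (2 ^ 11 * N)) :=
          mul_le_mul_of_nonneg_right (by norm_num) (by positivity)
      _ = r / (2 ^ 11 * N) := one_mul _
end
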